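/- (Localization lemma) Assume doubling. There exists K₀ depending only on the doubling constant with the following property: if B is a ball and x̄ ∈ B satisfies CF(x̄) ≤ λ, then for every K ≥ K₀, the set {x ∈ B : CF(x) > Kλ} is contained in {x : C(χ_{T(3B)}F)(x) > (K/K₀)·λ}. -/

import Mathlib

open Metric MeasureTheory ENNReal Classical

/-- The tent over a set `O`. -/
def tent {X : Type*} [MetricSpace X] (O : Set X) : Set (ℝ × X) :=
  {p | ∀ z ∉ O, p.1 ≤ dist p.2 z}

/-- `∫_{T(B)} |F(t,y)|² dy dt/t`. -/
noncomputable def tentInt {X : Type*} [MetricSpace X] [MeasurableSpace X]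
    (μ : Measure X) (F : ℝ → X → ℝ≥0∞) (B : Set X) : ℝ≥0∞ :=
  ∫⁻ t in Set.Ioi (0 : ℝ),
    (∫⁻ y in {y | (t, y) ∈ tent B}, (F t y) ^ 2 ∂μ) / ENNReal.ofReal t

/-- Tent maximal function `CF(x)`. -/
noncomputable def tentMax {X : Type*} [MetricSpace X] [MeasurableSpace X]
    (μ : Measure X) (F : ℝ → X → ℝ≥0∞) (x : X) : ℝ≥0∞ :=
  ⨆ (x₀ : X) (t : ℝ) (_ : x ∈ ball x₀ t),
    (tentInt μ F (ball x₀ t) / μ (ball x₀ t)) ^ (1/2 : ℝ)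

lemma tent_mono' {X : Type*} [MetricSpace X] {O O' : Set X} (h : O ⊆ O') :
    tent O ⊆ tent O' := fun p hp z hz => hp z (fun hzO => hz (h hzO))

lemma tentInt_mono' {X : Type*} [MetricSpace X] [MeasurableSpace X]
    (μ : Measure X) (F : ℝ → X → ℝ≥0∞) {B B' : Set X} (h : B ⊆ B') :
    tentInt μ F B ≤ tentInt μ F B' := by
  refine lintegral_mono fun t => ENNReal.div_le_div_right ?_ _
  exact lintegral_mono_set (fun y hy => tent_mono' h hy)

lemma sq_half {a : ℝ≥0∞} : (a ^ 2) ^ (1/2 : ℝ) = a := by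
  rw [← ENNReal.rpow_natCast a 2, ← ENNReal.rpow_mul]
  norm_num

theorem stmt_10 {X : Type*} [MetricSpace X] [MeasurableSpace X] [BorelSpace X]
    (μ : Measure X) (C₀ : NNReal) (hC₀ : 0 < C₀)
    (hdouble : ∀ (x : X) (r : ℝ), 0 < r → μ (ball x (2 * r)) ≤ (C₀ : ℝ≥0∞) * μ (ball x r)) :
    ∃ K₀ : ℝ≥0∞, 1 ≤ K₀ ∧ K₀ < ⊤ ∧
      ∀ (F : ℝ → X → ℝ≥0∞) (x₀ : X) (r : ℝ) (xb : X) (lam : ℝ≥0∞),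
        0 < r → xb ∈ ball x₀ r → tentMax μ F xb ≤ lam →
        ∀ K : ℝ≥0∞, K₀ ≤ K →
          {x ∈ ball x₀ r | K * lam < tentMax μ F x} ⊆
            {x | (K / K₀) * lam <
              tentMax μ (fun t y => if (t, y) ∈ tent (ball x₀ (3 * r)) then F t y else 0) x} := by
  refine ⟨(C₀ : ℝ≥0∞) + 1, le_add_self, ?_, ?_⟩
  · exact ENNReal.add_lt_top.2 ⟨ENNReal.coe_lt_top, ENNReal.one_lt_top⟩
  intro F x₀ r xb lam hr hxb hCxb K hK x hx
  obtain ⟨hxB, hval⟩ := hx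
  have hC₀K : (C₀ : ℝ≥0∞) ≤ K := le_trans (le_add_right le_rfl) hK
  simp only [tentMax, lt_iSup_iff] at hval
  obtain ⟨c, t, hxct, hv⟩ := hval
  have hxc := mem_ball.mp hxct
  have ht : 0 < t := lt_of_le_of_lt dist_nonneg hxc
  by_cases htr : t ≤ r
  · -- small ball: contained in 3B
    have hsub : ball c t ⊆ ball x₀ (3 * r) := by
      intro y hy
      have h1 := mem_ball.mp hy
      have h2 := mem_ball.mp hxB
      rw [mem_ball]
      have : dist y x₀ ≤ dist y c + dist x c + dist x x₀ := by
        calc dist y x₀ ≤ dist y c + dist c x₀ := dist_triangle _ _ _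
          _ ≤ dist y c + (dist c x + dist x x₀) := by gcongr; exact dist_triangle _ _ _
          _ = dist y c + dist x c + dist x x₀ := by rw [dist_comm c x]; ring
      linarith
    have heq : tentInt μ (fun t' y => if (t', y) ∈ tent (ball x₀ (3 * r)) then F t' y else 0)
        (ball c t) = tentInt μ F (ball c t) := by
      unfold tentInt
      refine lintegral_congr fun t' => ?_
      congr 1
      have hms : MeasurableSet {y : X | (t', y) ∈ tent (ball c t)} := by
        have hEq : {y : X | (t', y) ∈ tent (ball c t)}
            = ⋂ z ∈ (ball c t)ᶜ, {y : X | t' ≤ dist y z} := by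
          ext y; simp [tent, Set.mem_iInter]
        rw [hEq]
        exact (isClosed_biInter fun z _ =>
          isClosed_le continuous_const (continuous_id.dist continuous_const)).measurableSet
      refine setLIntegral_congr_fun hms (fun y hy => ?_)
      have : (t', y) ∈ tent (ball x₀ (3 * r)) := tent_mono' hsub hy
      simp [this]
    rw [Set.mem_setOf_eq]
    have hKK : K / ((C₀ : ℝ≥0∞) + 1) * lam ≤ K * lam := by
      refine mul_le_mul_left ?_ lam
      rw [div_eq_mul_inv]
      calc K * ((C₀ : ℝ≥0∞) + 1)⁻¹ ≤ K * 1 :=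
            mul_le_mul_right (ENNReal.inv_le_one.mpr le_add_self) K
        _ = K := mul_one K
    refine lt_of_le_of_lt hKK (lt_of_lt_of_le hv ?_)
    rw [← heq]
    exact le_iSup_of_le c (le_iSup_of_le t (le_iSup_of_le hxct le_rfl))
  · -- big ball: contradiction
    exfalso
    push_neg at htr
    have hxbc : xb ∈ ball c (3 * t) := by
      rw [mem_ball]
      have h1 := mem_ball.mp hxb
      have h2 := mem_ball.mp hxB
      have : dist xb c ≤ dist xb x₀ + dist x x₀ + dist x c := by
        calc dist xb c ≤ dist xb x₀ + dist x₀ c := dist_triangle _ _ _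
          _ ≤ dist xb x₀ + (dist x₀ x + dist x c) := by gcongr; exact dist_triangle _ _ _
          _ = dist xb x₀ + dist x x₀ + dist x c := by rw [dist_comm x₀ x]; ring
      linarith
    set It := tentInt μ F (ball c t) with hIt
    set I3 := tentInt μ F (ball c (3 * t)) with hI3
    set μt := μ (ball c t) with hμt
    set μ3 := μ (ball c (3 * t)) with hμ3
    have h3 : (I3 / μ3) ^ (1/2 : ℝ) ≤ lam := by
      refine le_trans ?_ hCxb
      exact le_iSup_of_le c (le_iSup_of_le (3 * t) (le_iSup_of_le hxbc le_rfl))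
    have hImono : It ≤ I3 := tentInt_mono' μ F (ball_subset_ball (by linarith))
    have hμd : μ3 ≤ (C₀ : ℝ≥0∞) ^ 2 * μt := by
      calc μ3 ≤ μ (ball c (2 * (2 * t))) := measure_mono (ball_subset_ball (by linarith))
        _ ≤ (C₀ : ℝ≥0∞) * μ (ball c (2 * t)) := hdouble c (2 * t) (by linarith)
        _ ≤ (C₀ : ℝ≥0∞) * ((C₀ : ℝ≥0∞) * μt) :=
            mul_le_mul_right (hdouble c t ht) _
        _ = (C₀ : ℝ≥0∞) ^ 2 * μt := by ring
    have key : It / μt ≤ ((C₀ : ℝ≥0∞) * lam) ^ 2 := by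
      by_cases hlam : lam = ⊤
      · have : ((C₀ : ℝ≥0∞) * lam) ^ 2 = ⊤ := by
          rw [hlam, ENNReal.mul_top (by exact_mod_cast hC₀.ne')]
          simp
        simp [this]
      · have h3' : I3 / μ3 ≤ lam ^ 2 := by
          have := ENNReal.rpow_le_rpow h3 (by norm_num : (0:ℝ) ≤ 2)
          rwa [← ENNReal.rpow_mul, one_div, inv_mul_cancel₀ (two_ne_zero), ENNReal.rpow_one,
            show (2:ℝ) = ((2:ℕ):ℝ) by norm_num, ENNReal.rpow_natCast] at this
        by_cases hμt0 : μt = 0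
        · -- then μ3 = 0
          have hμ30 : μ3 = 0 := le_antisymm (by simpa [hμt0] using hμd) zero_le
          by_cases hI30 : I3 = 0
          · have : It = 0 := le_antisymm (hI30 ▸ hImono) zero_le
            simp [this]
          · exfalso
            have hT : I3 / μ3 = ⊤ := by
              rw [hμ30, ENNReal.div_zero hI30]
            rw [hT] at h3'
            have h2T : lam ^ 2 = ⊤ := top_le_iff.mp h3'
            exact hlam (by
              by_contra h
              exact (ENNReal.pow_ne_top h) h2T)
        · by_cases hμtT : μt = ⊤
          · simp [hμtT, ENNReal.div_top]
          · have hμ3T : μ3 ≠ ⊤ := by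
              intro h
              rw [h] at hμd
              exact hμtT (by
                have := (ENNReal.mul_eq_top.mp (top_le_iff.mp hμd)).resolve_right
                  (fun ⟨hT, _⟩ => (ENNReal.pow_ne_top ENNReal.coe_ne_top) hT)
                exact this.2)
            have hμ30 : μ3 ≠ 0 := by
              intro h
              exact hμt0 (le_antisymm (h ▸ measure_mono (ball_subset_ball (by linarith)))
                zero_le)
            have hI3b : I3 ≤ lam ^ 2 * μ3 := (ENNReal.div_le_iff hμ30 hμ3T).mp h3'
            have : It ≤ ((C₀ : ℝ≥0∞) * lam) ^ 2 * μt := by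
              calc It ≤ I3 := hImono
                _ ≤ lam ^ 2 * μ3 := hI3b
                _ ≤ lam ^ 2 * ((C₀ : ℝ≥0∞) ^ 2 * μt) := mul_le_mul_right hμd _
                _ = ((C₀ : ℝ≥0∞) * lam) ^ 2 * μt := by ring
            exact (ENNReal.div_le_iff hμt0 hμtT).mpr this
    have hfin : (It / μt) ^ (1/2 : ℝ) ≤ (C₀ : ℝ≥0∞) * lam := by
      calc (It / μt) ^ (1/2 : ℝ) ≤ (((C₀ : ℝ≥0∞) * lam) ^ 2) ^ (1/2 : ℝ) :=
            ENNReal.rpow_le_rpow key (by norm_num)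
        _ = (C₀ : ℝ≥0∞) * lam := sq_half
    exact absurd (lt_of_lt_of_le hv hfin)
      (not_lt.mpr (mul_le_mul_left hC₀K lam))
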